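/- For fixed real t, the function ε ↦ ψ(t, ε) is nonincreasing in ε > 0, where ψ(t, ε) = t²/2 − κ ε|t|³ for |t| ≤ θ₀/ε, ψ(t, ε) = (1 − cos(εt))/ε² for θ₀ < ε|t| ≤ 2π, and ψ(t, ε) = 0 for |t| > 2π/ε. -/

import Mathlib

open Real

noncomputable def psi (θ₀ κ t ε : ℝ) : ℝ :=
  if ε * |t| ≤ θ₀ then t ^ 2 / 2 - κ * ε * |t| ^ 3
  else if ε * |t| ≤ 2 * π then (1 - Real.cos (ε * t)) / ε ^ 2
  else 0

lemma my_sin_nonpos {u : ℝ} (h1 : π ≤ u) (h2 : u ≤ 2 * π) : Real.sin u ≤ 0 := by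
  have h := Real.sin_nonneg_of_nonneg_of_le_pi (x := u - π) (by linarith) (by linarith)
  rw [Real.sin_sub_pi] at h
  linarith

lemma my_hasDeriv {x : ℝ} (hx : x ≠ 0) :
    HasDerivAt (fun u : ℝ => (1 - Real.cos u) / u ^ 2)
      ((Real.sin x * x ^ 2 - (1 - Real.cos x) * (2 * x)) / (x ^ 2) ^ 2) x := by
  have h1 : HasDerivAt (fun u : ℝ => 1 - Real.cos u) (Real.sin x) x := by
    simpa using (Real.hasDerivAt_cos x).const_sub 1
  have h2 : HasDerivAt (fun u : ℝ => u ^ 2) (2 * x) x := by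
    simpa using hasDerivAt_pow 2 x
  exact h1.div h2 (pow_ne_zero 2 hx)

lemma my_antitone : AntitoneOn (fun u : ℝ => (1 - Real.cos u) / u ^ 2) (Set.Icc π (2 * π)) := by
  have hπ := Real.pi_pos
  apply antitoneOn_of_deriv_nonpos (convex_Icc _ _)
  · apply ContinuousOn.div
    · fun_prop
    · fun_prop
    · intro x hx
      exact pow_ne_zero 2 (ne_of_gt (lt_of_lt_of_le hπ hx.1))
  · intro x hx
    rw [interior_Icc] at hx
    have hx0 : x ≠ 0 := ne_of_gt (lt_trans hπ hx.1)
    exact (my_hasDeriv hx0).differentiableAt.differentiableWithinAt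
  · intro x hx
    rw [interior_Icc] at hx
    have hx1 : π < x := hx.1
    have hxpos : 0 < x := lt_trans hπ hx1
    have hx0 : x ≠ 0 := ne_of_gt hxpos
    rw [(my_hasDeriv hx0).deriv]
    apply div_nonpos_of_nonpos_of_nonneg _ (le_of_lt (pow_pos (pow_pos hxpos 2) 2))
    have hs : Real.sin x ≤ 0 := my_sin_nonpos hx1.le hx.2.le
    have hc : Real.cos x ≤ 1 := Real.cos_le_one x
    nlinarith

theorem stmt_17 (θ₀ κ : ℝ)
    (hθ : θ₀ ∈ Set.Icc π (2 * π))
    (hroot : θ₀ ^ 2 + 2 * θ₀ * Real.sin θ₀ + 6 * (Real.cos θ₀ - 1) = 0)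
    (hκ : κ = θ₀⁻¹ ^ 3 * (Real.cos θ₀ - 1 + θ₀ ^ 2 / 2))
    (t : ℝ) :
    ∀ ε₁ ε₂ : ℝ, 0 < ε₁ → ε₁ ≤ ε₂ → psi θ₀ κ t ε₂ ≤ psi θ₀ κ t ε₁ := by
  intro ε₁ ε₂ hε₁ h12
  have hπ := Real.pi_pos
  have hθ1 : π ≤ θ₀ := hθ.1
  have hθ2 : θ₀ ≤ 2 * π := hθ.2
  have hθpos : 0 < θ₀ := lt_of_lt_of_le hπ hθ1
  have hε₂ : 0 < ε₂ := lt_of_lt_of_le hε₁ h12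
  have hcθ : Real.cos θ₀ ≤ 1 := Real.cos_le_one θ₀
  have hcθ' : -1 ≤ Real.cos θ₀ := Real.neg_one_le_cos θ₀
  have hκ0 : 0 ≤ κ := by
    rw [hκ]
    apply mul_nonneg (by positivity)
    have hπ3 : (3 : ℝ) < π := Real.pi_gt_three
    have h9 : 9 < θ₀ ^ 2 := by nlinarith
    linarith
  have hid : 1 / 2 - κ * θ₀ = (1 - Real.cos θ₀) / θ₀ ^ 2 := by
    rw [hκ]
    field_simp
    ring
  have hκθ : κ * θ₀ ≤ 1 / 2 := by
    have : 0 ≤ (1 - Real.cos θ₀) / θ₀ ^ 2 := div_nonneg (by linarith) (by positivity)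
    linarith
  have hs0 : 0 ≤ |t| := abs_nonneg t
  have hAB : ε₁ * |t| ≤ ε₂ * |t| := mul_le_mul_of_nonneg_right h12 hs0
  have hcos : ∀ ε : ℝ, Real.cos (ε * t) = Real.cos (ε * |t|) := by
    intro ε
    rcases abs_choice t with h | h
    · rw [h]
    · rw [h, mul_neg, Real.cos_neg]
  have hθmem : θ₀ ∈ Set.Icc π (2 * π) := ⟨hθ1, hθ2⟩
  have hmid : ∀ ε : ℝ, 0 < ε → t ≠ 0 →
      (1 - Real.cos (ε * t)) / ε ^ 2 = |t| ^ 2 * ((1 - Real.cos (ε * |t|)) / (ε * |t|) ^ 2) := by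
    intro ε hε ht
    rw [hcos]
    have ht' : |t| ≠ 0 := abs_ne_zero.mpr ht
    field_simp
  unfold psi
  by_cases c3 : ε₁ * |t| ≤ θ₀
  · rw [if_pos c3]
    by_cases c1 : ε₂ * |t| ≤ θ₀
    · rw [if_pos c1]
      nlinarith [mul_le_mul_of_nonneg_left (mul_le_mul_of_nonneg_right h12 (pow_nonneg hs0 3)) hκ0]
    · rw [if_neg c1]
      have ht : t ≠ 0 := by
        intro h; rw [h] at c1; simp at c1; exact absurd hθpos.le (not_le.mpr c1)
      have hts : 0 < |t| := abs_pos.mpr ht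
      have hB1 : θ₀ < ε₂ * |t| := not_le.mp c1
      have hfirst : |t| ^ 2 * ((1 - Real.cos θ₀) / θ₀ ^ 2) ≤ t ^ 2 / 2 - κ * ε₁ * |t| ^ 3 := by
        rw [← hid]
        have h1 : κ * ε₁ * |t| ^ 3 ≤ κ * θ₀ * |t| ^ 2 := by
          have : κ * (ε₁ * |t|) * |t| ^ 2 ≤ κ * θ₀ * |t| ^ 2 := by
            apply mul_le_mul_of_nonneg_right _ (by positivity)
            exact mul_le_mul_of_nonneg_left c3 hκ0
          nlinarith
        nlinarith [sq_abs t]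
      by_cases c2 : ε₂ * |t| ≤ 2 * π
      · rw [if_pos c2]
        have hBmem : ε₂ * |t| ∈ Set.Icc π (2 * π) := ⟨by linarith, c2⟩
        have hh := my_antitone hθmem hBmem hB1.le
        rw [hmid ε₂ hε₂ ht]
        calc |t| ^ 2 * ((1 - Real.cos (ε₂ * |t|)) / (ε₂ * |t|) ^ 2)
            ≤ |t| ^ 2 * ((1 - Real.cos θ₀) / θ₀ ^ 2) :=
              mul_le_mul_of_nonneg_left hh (by positivity)
          _ ≤ _ := hfirst
      · rw [if_neg c2]
        calc (0 : ℝ) ≤ |t| ^ 2 * ((1 - Real.cos θ₀) / θ₀ ^ 2) :=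
              mul_nonneg (by positivity) (div_nonneg (by linarith) (by positivity))
          _ ≤ _ := hfirst
  · rw [if_neg c3]
    have ht : t ≠ 0 := by
      intro h; rw [h] at c3; simp at c3; exact absurd hθpos.le (not_le.mpr c3)
    have hts : 0 < |t| := abs_pos.mpr ht
    have hA1 : θ₀ < ε₁ * |t| := not_le.mp c3
    have c1 : ¬ ε₂ * |t| ≤ θ₀ := by push_neg; linarith
    rw [if_neg c1]
    by_cases c4 : ε₁ * |t| ≤ 2 * π
    · rw [if_pos c4]
      by_cases c2 : ε₂ * |t| ≤ 2 * π
      · rw [if_pos c2]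
        have hAmem : ε₁ * |t| ∈ Set.Icc π (2 * π) := ⟨by linarith, c4⟩
        have hBmem : ε₂ * |t| ∈ Set.Icc π (2 * π) := ⟨by linarith, c2⟩
        have hh := my_antitone hAmem hBmem hAB
        rw [hmid ε₁ hε₁ ht, hmid ε₂ hε₂ ht]
        exact mul_le_mul_of_nonneg_left hh (by positivity)
      · rw [if_neg c2]
        have : Real.cos (ε₁ * t) ≤ 1 := Real.cos_le_one _
        have h1 : 0 ≤ 1 - Real.cos (ε₁ * t) := by linarith
        exact div_nonneg h1 (by positivity)
    · rw [if_neg c4]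
      have c2 : ¬ ε₂ * |t| ≤ 2 * π := by push_neg at c4 ⊢; linarith
      rw [if_neg c2]
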